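/- Let 0 < r < R. Define G : [0,R] → ℝ by G(x) = R·g(x/R) - r·g(x/r) for 0 ≤ x ≤ r and G(x) = R·g(x/R) for r ≤ x ≤ R, where g(t) = (√(1-t²) - t·arccos(t))/π. Then G is continuous on [0,R], strictly decreasing, with G(0) = (R-r)/π and G(R) = 0. -/

import Mathlib

noncomputable def g (t : ℝ) : ℝ := (Real.sqrt (1 - t^2) - t * Real.arccos t) / Real.pi

noncomputable def G (r R x : ℝ) : ℝ :=
  if x ≤ r then R * g (x / R) - r * g (x / r) else R * g (x / R)

lemma g_cont : Continuous g :=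
  ((Real.continuous_sqrt.comp (by continuity)).sub
    (continuous_id.mul Real.continuous_arccos)).div_const _

lemma g_one : g 1 = 0 := by
  simp [g, Real.arccos_one]

lemma g_zero : g 0 = 1 / Real.pi := by
  simp [g]

lemma hasDerivAt_g {t : ℝ} (h1 : -1 < t) (h2 : t < 1) :
    HasDerivAt g (-(Real.arccos t) / Real.pi) t := by
  have hs : 0 < 1 - t ^ 2 := by nlinarith
  have hsqrt : 0 < Real.sqrt (1 - t ^ 2) := Real.sqrt_pos.mpr hs
  have hinner : HasDerivAt (fun t : ℝ => 1 - t ^ 2) (-(2 * t)) t := by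
    simpa using (hasDerivAt_pow 2 t).const_sub 1
  have h3 : HasDerivAt (fun t : ℝ => Real.sqrt (1 - t ^ 2))
      (1 / (2 * Real.sqrt (1 - t ^ 2)) * (-(2 * t))) t :=
    (Real.hasDerivAt_sqrt hs.ne').comp t hinner
  have h4 : HasDerivAt (fun t : ℝ => t * Real.arccos t)
      (1 * Real.arccos t + t * (-(1 / Real.sqrt (1 - t ^ 2)))) t :=
    (hasDerivAt_id t).mul (Real.hasDerivAt_arccos (by linarith) (by linarith))
  have h5 := (h3.sub h4).div_const Real.pi
  refine h5.congr_deriv ?_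
  field_simp
  ring

lemma hasDerivAt_scaled {c x : ℝ} (hc : 0 < c) (hx0 : -c < x) (hxc : x < c) :
    HasDerivAt (fun x => c * g (x / c)) (-(Real.arccos (x / c)) / Real.pi) x := by
  have h1 : -1 < x / c := by rw [lt_div_iff₀ hc]; linarith
  have h2 : x / c < 1 := by rw [div_lt_one hc]; linarith
  have h := ((hasDerivAt_g h1 h2).comp x ((hasDerivAt_id x).div_const c)).const_mul c
  refine h.congr_deriv ?_
  field_simp

lemma G_eqOn_left (r R : ℝ) : Set.EqOn (G r R)
    (fun x => R * g (x / R) - r * g (x / r)) (Set.Icc 0 r) := by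
  intro x hx
  simp [G, hx.2]

lemma G_eqOn_right (r R : ℝ) (hr : 0 < r) : Set.EqOn (G r R)
    (fun x => R * g (x / R)) (Set.Icc r R) := by
  intro x hx
  by_cases h : x ≤ r
  · have : x = r := le_antisymm h hx.1
    simp [G, h, this, div_self hr.ne', g_one]
  · simp [G, h]

theorem G_properties (r R : ℝ) (hr : 0 < r) (hrR : r < R) :
    ContinuousOn (G r R) (Set.Icc 0 R) ∧ StrictAntiOn (G r R) (Set.Icc 0 R) ∧
    G r R 0 = (R - r) / Real.pi ∧ G r R R = 0 := by
  have hR : 0 < R := hr.trans hrR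
  have hcont1 : Continuous (fun x : ℝ => R * g (x / R) - r * g (x / r)) :=
    (continuous_const.mul (g_cont.comp (continuous_id.div_const R))).sub
      (continuous_const.mul (g_cont.comp (continuous_id.div_const r)))
  have hcont2 : Continuous (fun x : ℝ => R * g (x / R)) :=
    continuous_const.mul (g_cont.comp (continuous_id.div_const R))
  -- continuity
  have hcont : ContinuousOn (G r R) (Set.Icc 0 R) := by
    unfold G
    refine (Continuous.if_le hcont1 hcont2 continuous_id continuous_const ?_).continuousOn
    intro x hx
    simp only [id_eq] at hx
    simp [hx, div_self hr.ne', g_one]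
  -- strict anti on left piece
  have hleft : StrictAntiOn (G r R) (Set.Icc 0 r) := by
    have h1 : StrictAntiOn (fun x => R * g (x / R) - r * g (x / r)) (Set.Icc 0 r) := by
      apply strictAntiOn_of_deriv_neg (convex_Icc 0 r) hcont1.continuousOn
      intro x hx
      rw [interior_Icc] at hx
      have hd : HasDerivAt (fun x => R * g (x / R) - r * g (x / r))
          (-(Real.arccos (x / R)) / Real.pi - -(Real.arccos (x / r)) / Real.pi) x :=
        (hasDerivAt_scaled hR (by linarith [hx.1]) (by linarith [hx.2])).sub
          (hasDerivAt_scaled hr (by linarith [hx.1]) hx.2)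
      rw [hd.deriv]
      have hxR0 : (0:ℝ) ≤ x / R := div_nonneg hx.1.le hR.le
      have hxr0 : (0:ℝ) ≤ x / r := div_nonneg hx.1.le hr.le
      have harc : Real.arccos (x / r) < Real.arccos (x / R) := by
        apply Real.strictAntiOn_arccos
        · exact ⟨by linarith, by rw [div_le_one hR]; nlinarith [hx.2]⟩
        · exact ⟨by linarith, by rw [div_le_one hr]; exact hx.2.le⟩
        · rw [div_lt_div_iff₀ hR hr]; nlinarith [hx.1]
      have hpi := Real.pi_pos
      have hdiv : Real.arccos (x / r) / Real.pi < Real.arccos (x / R) / Real.pi := by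
        gcongr
      rw [neg_div, neg_div]
      linarith
    intro a ha b hb hab
    rw [G_eqOn_left r R ha, G_eqOn_left r R hb]
    exact h1 ha hb hab
  -- strict anti on right piece
  have hright : StrictAntiOn (G r R) (Set.Icc r R) := by
    have h1 : StrictAntiOn (fun x => R * g (x / R)) (Set.Icc r R) := by
      apply strictAntiOn_of_deriv_neg (convex_Icc r R) hcont2.continuousOn
      intro x hx
      rw [interior_Icc] at hx
      have hd := hasDerivAt_scaled hR (by linarith [hx.1]) hx.2
      rw [hd.deriv]
      have harc : 0 < Real.arccos (x / R) := Real.arccos_pos.mpr (by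
        rw [div_lt_one hR]; exact hx.2)
      have hpi := Real.pi_pos
      rw [neg_div]
      linarith [div_pos harc hpi]
    intro a ha b hb hab
    rw [G_eqOn_right r R hr ha, G_eqOn_right r R hr hb]
    exact h1 ha hb hab
  refine ⟨hcont, ?_, ?_, ?_⟩
  · intro a ha b hb hab
    by_cases hbr : b ≤ r
    · exact hleft ⟨ha.1, hab.le.trans hbr⟩ ⟨hb.1, hbr⟩ hab
    · by_cases har : r ≤ a
      · exact hright ⟨har, ha.2⟩ ⟨le_of_not_ge hbr, hb.2⟩ hab
      · have h1 := hleft ⟨ha.1, le_of_not_ge har⟩ ⟨hr.le, le_refl r⟩ (lt_of_not_ge har)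
        have h2 := hright ⟨le_refl r, hrR.le⟩ ⟨le_of_not_ge hbr, hb.2⟩ (lt_of_not_ge hbr)
        linarith
  · have h0 : G r R 0 = R * (1 / Real.pi) - r * (1 / Real.pi) := by
      simp [G, hr.le, g_zero]
    rw [h0]; ring
  · have : ¬ R ≤ r := not_le.mpr hrR
    simp [G, this, div_self hR.ne', g_one]
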